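/- arXiv:1909.05283 — 2 statements merged into one kernel-verified Lean document; each statement's English description precedes it below -/
import Mathlib

section
/- The Schubert structure operator Λ°_α := e^{-α} r_α (-π_α) ⊗ 1 ⊗ 1 + e^{-α} r_α ⊗ π_α ⊗ 1 + e^{-α} r_α ⊗ 1 ⊗ π_α + (1-e^{-α}) r_α ⊗ π_α ⊗ π_α is idempotent: (Λ°_α)² = Λ°_α. -/
/-- The K-theoretic Schubert structure operator
`Λ°_α = e^{-α} r_α (-π_α) ⊗ 1 ⊗ 1 + e^{-α} r_α ⊗ π_α ⊗ 1
        + e^{-α} r_α ⊗ 1 ⊗ π_α + (1-e^{-α}) r_α ⊗ π_α ⊗ π_α`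
is idempotent. We encode the triple tensor product abstractly: in a ring `A`,
the first factor is the operator algebra on the group algebra of the weight
lattice, generated by `t = e^{-α}` (with inverse `s = e^α`), the reflection
`r` (`r² = 1`, `r t = s r`), and the isobaric Demazure operator `π`
characterized by `(1 - t) π = 1 - t r` (with `1 - t` left-regular and
`π² = π`); the second and third factors are idempotents `p`, `q`, and
elements of distinct factors commute. -/
theorem Schubert_structure_operator_Lambda_circ_idempotent
    {A : Type*} [Ring A] (t s r π p q : A)
    (hr : r * r = 1)
    (hts : t * s = 1) (hst : s * t = 1)
    (hrt : r * t = s * r)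
    (hreg : ∀ x : A, (1 - t) * x = 0 → x = 0)
    (hπ : (1 - t) * π = 1 - t * r)
    (hππ : π * π = π)
    (hp : p * p = p) (hq : q * q = q)
    (hpq : p * q = q * p)
    (hpt : p * t = t * p) (hps : p * s = s * p) (hpr : p * r = r * p)
    (hpπ : p * π = π * p)
    (hqt : q * t = t * q) (hqs : q * s = s * q) (hqr : q * r = r * q)
    (hqπ : q * π = π * q) :
    (-(t * r * π) + t * r * p + t * r * q + (1 - t) * r * (p * q)) *
      (-(t * r * π) + t * r * p + t * r * q + (1 - t) * r * (p * q)) =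
      -(t * r * π) + t * r * p + t * r * q + (1 - t) * r * (p * q) := by
  -- derived relations
  have hrs : r * s = t * r := by
    have h : t * (r * t) * s = t * (s * r) * s := by rw [hrt]
    have h1 : t * (r * t) * s = t * r * (t * s) := by noncomm_ring
    have h2 : t * (s * r) * s = (t * s) * (r * s) := by noncomm_ring
    rw [h1, h2, hts, mul_one, one_mul] at h
    exact h.symm
  have htπ : t * π = π - 1 + t * r := by
    have h : t * π = π - (1 - t) * π := by noncomm_ring
    rw [h, hπ]; noncomm_ring
  have htrπ : t * (r * π) = t * π := by
    have h : t * r = t * π - π + 1 := by rw [htπ]; noncomm_ring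
    calc t * (r * π) = (t * r) * π := by rw [mul_assoc]
      _ = (t * π - π + 1) * π := by rw [h]
      _ = t * (π * π) - π * π + π := by noncomm_ring
      _ = t * π := by rw [hππ]; noncomm_ring
  have hrπ : r * π = π := by
    have h : s * (t * (r * π)) = s * (t * π) := by rw [htrπ]
    rw [← mul_assoc, hst, one_mul, ← mul_assoc, hst, one_mul] at h
    exact h
  have hsπ : s * π = π - r + s := by
    calc s * π = s * (r * π) := by rw [hrπ]
      _ = (s * r) * π := by rw [mul_assoc]
      _ = (r * t) * π := by rw [hrt]
      _ = r * (t * π) := by rw [mul_assoc]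
      _ = r * (π - 1 + t * r) := by rw [htπ]
      _ = r * π - r + (r * t) * r := by noncomm_ring
      _ = π - r + (s * r) * r := by rw [hrπ, hrt]
      _ = π - r + s * (r * r) := by rw [mul_assoc]
      _ = π - r + s := by rw [hr, mul_one]
  -- ∀-quantified rewrite rules
  have Ats : ∀ x : A, t * (s * x) = x := fun x => by rw [← mul_assoc, hts, one_mul]
  have Ast : ∀ x : A, s * (t * x) = x := fun x => by rw [← mul_assoc, hst, one_mul]
  have Arr : ∀ x : A, r * (r * x) = x := fun x => by rw [← mul_assoc, hr, one_mul]
  have Art : ∀ x : A, r * (t * x) = s * (r * x) := fun x => by rw [← mul_assoc, hrt, mul_assoc]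
  have Ars : ∀ x : A, r * (s * x) = t * (r * x) := fun x => by rw [← mul_assoc, hrs, mul_assoc]
  have Arπ : ∀ x : A, r * (π * x) = π * x := fun x => by rw [← mul_assoc, hrπ]
  have Atπ : ∀ x : A, t * (π * x) = π * x - x + t * (r * x) := fun x => by
    rw [← mul_assoc, htπ]; noncomm_ring
  have Asπ : ∀ x : A, s * (π * x) = π * x - r * x + s * x := fun x => by
    rw [← mul_assoc, hsπ]; noncomm_ring
  have Aππ : ∀ x : A, π * (π * x) = π * x := fun x => by rw [← mul_assoc, hππ]
  have App : ∀ x : A, p * (p * x) = p * x := fun x => by rw [← mul_assoc, hp]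
  have Aqq : ∀ x : A, q * (q * x) = q * x := fun x => by rw [← mul_assoc, hq]
  have Apq : ∀ x : A, p * (q * x) = q * (p * x) := fun x => by rw [← mul_assoc, hpq, mul_assoc]
  have Apt : ∀ x : A, p * (t * x) = t * (p * x) := fun x => by rw [← mul_assoc, hpt, mul_assoc]
  have Aps : ∀ x : A, p * (s * x) = s * (p * x) := fun x => by rw [← mul_assoc, hps, mul_assoc]
  have Apr : ∀ x : A, p * (r * x) = r * (p * x) := fun x => by rw [← mul_assoc, hpr, mul_assoc]
  have Apπ : ∀ x : A, p * (π * x) = π * (p * x) := fun x => by rw [← mul_assoc, hpπ, mul_assoc]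
  have Aqt : ∀ x : A, q * (t * x) = t * (q * x) := fun x => by rw [← mul_assoc, hqt, mul_assoc]
  have Aqs : ∀ x : A, q * (s * x) = s * (q * x) := fun x => by rw [← mul_assoc, hqs, mul_assoc]
  have Aqr : ∀ x : A, q * (r * x) = r * (q * x) := fun x => by rw [← mul_assoc, hqr, mul_assoc]
  have Aqπ : ∀ x : A, q * (π * x) = π * (q * x) := fun x => by rw [← mul_assoc, hqπ, mul_assoc]
  set L : A := -(t * r * π) + t * r * p + t * r * q + (1 - t) * r * (p * q) with hL
  have key : (1 - t) * (L * L - L) = 0 := by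
    rw [hL]
    simp only [mul_add, add_mul, mul_sub, sub_mul, mul_one, one_mul, mul_neg, neg_mul,
      neg_neg, mul_assoc,
      Ats, Ast, Arr, Art, Ars, Arπ, Atπ, Asπ, Aππ, App, Aqq, Apq, Apt, Aps, Apr, Apπ,
      Aqt, Aqs, Aqr, Aqπ,
      hts, hst, hr, hrt, hrs, hrπ, htπ, hsπ, hππ, hp, hq, hpq, hpt, hps, hpr, hpπ,
      hqt, hqs, hqr, hqπ]
    abel
  have h := hreg _ key
  exact sub_eq_zero.mp h
end

section
/- The Schubert structure operator Λ_α := -𝛿_α r_α ⊗ 1 ⊗ 1 + r_α ⊗ 𝛿_α ⊗ 1 + r_α ⊗ 1 ⊗ 𝛿_α + (e^{-α}-1) r_α ⊗ 𝛿_α ⊗ 𝛿_α is idempotent: Λ_α² = Λ_α. -/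
/-- The K-theoretic Schubert structure operator
`Λ_α = -𝛿_α r_α ⊗ 1 ⊗ 1 + r_α ⊗ 𝛿_α ⊗ 1 + r_α ⊗ 1 ⊗ 𝛿_α
       + (e^{-α}-1) r_α ⊗ 𝛿_α ⊗ 𝛿_α`
is idempotent. We encode the triple tensor product abstractly: in a ring `A`,
the first factor is the operator algebra on the group algebra of the weight
lattice, generated by `t = e^{-α}` (with inverse `s = e^α`), the reflection
`r` (`r² = 1`, `r t = s r`), and the ordinary Demazure operator `δ`
characterized by `(1 - t) δ = 1 - r` (with `1 - t` left-regular and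
`δ² = δ`); the second and third factors are idempotents `p`, `q`, and
elements of distinct factors commute. -/
theorem Schubert_structure_operator_Lambda_idempotent
    {A : Type*} [Ring A] (t s r δ p q : A)
    (hr : r * r = 1)
    (hts : t * s = 1) (hst : s * t = 1)
    (hrt : r * t = s * r)
    (hreg : ∀ x : A, (1 - t) * x = 0 → x = 0)
    (hδ : (1 - t) * δ = 1 - r)
    (hδδ : δ * δ = δ)
    (hp : p * p = p) (hq : q * q = q)
    (hpq : p * q = q * p)
    (hpt : p * t = t * p) (hps : p * s = s * p) (hpr : p * r = r * p)
    (hpδ : p * δ = δ * p)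
    (hqt : q * t = t * q) (hqs : q * s = s * q) (hqr : q * r = r * q)
    (hqδ : q * δ = δ * q) :
    (-(δ * r) + r * p + r * q + (t - 1) * r * (p * q)) *
      (-(δ * r) + r * p + r * q + (t - 1) * r * (p * q)) =
      -(δ * r) + r * p + r * q + (t - 1) * r * (p * q) := by
  have h1 : r * t * r = s := by rw [hrt, mul_assoc, hr, mul_one]
  have hrs : r * s = t * r := by rw [← h1, ← mul_assoc, ← mul_assoc, hr, one_mul]
  have htδ : t * δ = δ - 1 + r := by
    have h2 : δ - t * δ = 1 - r := by rw [← hδ]; noncomm_ring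
    calc t * δ = δ - (δ - t * δ) := by noncomm_ring
      _ = δ - (1 - r) := by rw [h2]
      _ = δ - 1 + r := by noncomm_ring
  have hsδ : s * δ = δ + s - s * r := by
    have h3 : s * (t * δ) = δ := by rw [← mul_assoc, hst, one_mul]
    rw [htδ] at h3
    calc s * δ = s * (δ - 1 + r) - s * r + s := by noncomm_ring
      _ = δ - s * r + s := by rw [h3]
      _ = δ + s - s * r := by noncomm_ring
  have hδr : δ * r = -δ := by
    have key : (1 - t) * (δ * r + δ) = 0 := by
      have e1 : (1 - t) * (δ * r) = (1 - r) * r := by rw [← mul_assoc, hδ]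
      rw [mul_add, e1, hδ, sub_mul, one_mul, hr]; noncomm_ring
    have h4 := hreg _ key
    calc δ * r = (δ * r + δ) - δ := by noncomm_ring
      _ = 0 - δ := by rw [h4]
      _ = -δ := by noncomm_ring
  have hrδ : r * δ = δ - 1 + r := by
    have e2 : r * (s * r) = t := by rw [← mul_assoc, hrs, mul_assoc, hr, mul_one]
    have e1 : t * (r * δ) = r * δ + r * s - t := by
      rw [← mul_assoc, ← hrs, mul_assoc, hsδ]
      calc r * (δ + s - s * r) = r * δ + r * s - r * (s * r) := by noncomm_ring
        _ = r * δ + r * s - t := by rw [e2]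
    have key : (1 - t) * (r * δ - (δ - 1 + r)) = 0 := by
      have expand : (1 - t) * (r * δ - (δ - 1 + r)) =
          r * δ - t * (r * δ) - (δ - t * δ) + (1 - t) - (r - t * r) := by noncomm_ring
      rw [expand, e1, htδ, ← hrs]; noncomm_ring
    have h5 := hreg _ key
    calc r * δ = (r * δ - (δ - 1 + r)) + (δ - 1 + r) := by noncomm_ring
      _ = 0 + (δ - 1 + r) := by rw [h5]
      _ = δ - 1 + r := by noncomm_ring
  have hδt : δ * t = δ - 1 - s * r := by
    have e3 : t * (δ * t) = δ * t - t + s * r := by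
      rw [← mul_assoc, htδ, add_mul, sub_mul, one_mul, hrt]
    have e4 : t * (s * r) = r := by rw [← mul_assoc, hts, one_mul]
    have key : (1 - t) * (δ * t - (δ - 1 - s * r)) = 0 := by
      have expand : (1 - t) * (δ * t - (δ - 1 - s * r)) =
          δ * t - t * (δ * t) - (δ - t * δ) + (1 - t) + s * r - t * (s * r) := by
        noncomm_ring
      rw [expand, e3, e4, htδ]; noncomm_ring
    have h6 := hreg _ key
    calc δ * t = (δ * t - (δ - 1 - s * r)) + (δ - 1 - s * r) := by noncomm_ring
      _ = 0 + (δ - 1 - s * r) := by rw [h6]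
      _ = δ - 1 - s * r := by noncomm_ring
  have hδs : δ * s = δ + s + r := by
    have e5 : δ * t * s = δ := by rw [mul_assoc, hts, mul_one]
    rw [hδt] at e5
    have e6 : s * (r * s) = r := by rw [hrs, ← mul_assoc, hst, one_mul]
    calc δ * s = (δ - 1 - s * r) * s + s + s * (r * s) := by noncomm_ring
      _ = δ + s + r := by rw [e5, e6]
  -- associativity variants
  have hr' : ∀ x : A, r * (r * x) = x := fun x => by rw [← mul_assoc, hr, one_mul]
  have hts' : ∀ x : A, t * (s * x) = x := fun x => by rw [← mul_assoc, hts, one_mul]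
  have hst' : ∀ x : A, s * (t * x) = x := fun x => by rw [← mul_assoc, hst, one_mul]
  have hrt' : ∀ x : A, r * (t * x) = s * (r * x) := fun x => by
    rw [← mul_assoc, hrt, mul_assoc]
  have hrs' : ∀ x : A, r * (s * x) = t * (r * x) := fun x => by
    rw [← mul_assoc, hrs, mul_assoc]
  have hδδ' : ∀ x : A, δ * (δ * x) = δ * x := fun x => by rw [← mul_assoc, hδδ]
  have hδr' : ∀ x : A, δ * (r * x) = -(δ * x) := fun x => by
    rw [← mul_assoc, hδr, neg_mul]
  have hδt' : ∀ x : A, δ * (t * x) = δ * x - x - s * (r * x) := fun x => by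
    rw [← mul_assoc, hδt, sub_mul, sub_mul, one_mul, mul_assoc]
  have hδs' : ∀ x : A, δ * (s * x) = δ * x + s * x + r * x := fun x => by
    rw [← mul_assoc, hδs, add_mul, add_mul]
  have htδ' : ∀ x : A, t * (δ * x) = δ * x - x + r * x := fun x => by
    rw [← mul_assoc, htδ, add_mul, sub_mul, one_mul]
  have hrδ' : ∀ x : A, r * (δ * x) = δ * x - x + r * x := fun x => by
    rw [← mul_assoc, hrδ, add_mul, sub_mul, one_mul]
  have hsδ' : ∀ x : A, s * (δ * x) = δ * x + s * x - s * (r * x) := fun x => by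
    rw [← mul_assoc, hsδ, sub_mul, add_mul, mul_assoc]
  have hp' : ∀ x : A, p * (p * x) = p * x := fun x => by rw [← mul_assoc, hp]
  have hq' : ∀ x : A, q * (q * x) = q * x := fun x => by rw [← mul_assoc, hq]
  have hpq' : ∀ x : A, p * (q * x) = q * (p * x) := fun x => by
    rw [← mul_assoc, hpq, mul_assoc]
  have hpt' : ∀ x : A, p * (t * x) = t * (p * x) := fun x => by
    rw [← mul_assoc, hpt, mul_assoc]
  have hps' : ∀ x : A, p * (s * x) = s * (p * x) := fun x => by
    rw [← mul_assoc, hps, mul_assoc]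
  have hpr' : ∀ x : A, p * (r * x) = r * (p * x) := fun x => by
    rw [← mul_assoc, hpr, mul_assoc]
  have hpδ' : ∀ x : A, p * (δ * x) = δ * (p * x) := fun x => by
    rw [← mul_assoc, hpδ, mul_assoc]
  have hqt' : ∀ x : A, q * (t * x) = t * (q * x) := fun x => by
    rw [← mul_assoc, hqt, mul_assoc]
  have hqs' : ∀ x : A, q * (s * x) = s * (q * x) := fun x => by
    rw [← mul_assoc, hqs, mul_assoc]
  have hqr' : ∀ x : A, q * (r * x) = r * (q * x) := fun x => by
    rw [← mul_assoc, hqr, mul_assoc]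
  have hqδ' : ∀ x : A, q * (δ * x) = δ * (q * x) := fun x => by
    rw [← mul_assoc, hqδ, mul_assoc]
  simp only [mul_add, add_mul, mul_sub, sub_mul, mul_one, one_mul, mul_neg, neg_mul,
    mul_assoc, neg_neg, neg_add, neg_sub,
    hr, hr', hts, hts', hst, hst', hrt, hrt', hrs, hrs',
    hδδ, hδδ', hδr, hδr', hδt, hδt', hδs, hδs', htδ, htδ', hrδ, hrδ', hsδ, hsδ',
    hp, hp', hq, hq', hpq, hpq', hpt, hpt', hps, hps', hpr, hpr', hpδ, hpδ',
    hqt, hqt', hqs, hqs', hqr, hqr', hqδ, hqδ']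
  noncomm_ring
end
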